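/- For the RS-game (N₀, v) corresponding to an RS-situation, the core admits the reduced description Core(N₀, v) = {x ∈ ℝ^{N₀} : ∑_{i∈N₀} x_i = v(N₀); x_i ≤ v({0, i}) for every i ∈ N; and ∑_{i∈S} x_i ≥ v(S) for every coalition S ⊆ N}. -/

import Mathlib

open Finset

/-- An RS-situation with `n` retailers; the supplier is treated separately.
`c` is the unit production cost, `w` the wholesale price function and
`p i` the expected price function of retailer `i`.  All price functions are
decreasing and continuous on `[0, ∞)`, `w` exceeds `c` everywhere,
`p i 0 > w 0` and `p i` reaches the value `c` at some positive quantity. -/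
structure RSSituation (n : ℕ) where
  c : ℝ
  w : ℝ → ℝ
  p : Fin n → ℝ → ℝ
  w_anti : ∀ ⦃q q' : ℝ⦄, 0 ≤ q → q ≤ q' → w q' ≤ w q
  w_cont : ContinuousOn w (Set.Ici 0)
  w_gt_c : ∀ q : ℝ, 0 ≤ q → c < w q
  p_anti : ∀ i : Fin n, ∀ ⦃q q' : ℝ⦄, 0 ≤ q → q ≤ q' → p i q' ≤ p i q
  p_cont : ∀ i : Fin n, ContinuousOn (p i) (Set.Ici 0)
  p_zero_gt : ∀ i : Fin n, w 0 < p i 0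
  exists_eq_c : ∀ i : Fin n, ∃ q : ℝ, 0 < q ∧ p i q = c

namespace RSSituation

variable {n : ℕ}

/-- The feasible set `Q^S ⊆ [0,∞)^S` of order vectors for a coalition `S` of retailers. -/
def QSet (R : RSSituation n) (S : Finset (Fin n)) : Set (S → ℝ) :=
  {q | ∀ i : S, 0 ≤ q i ∧ R.w (∑ j : S, q j) ≤ R.p i.1 (q i)}

/-- The joint profit `∑_{i ∈ S} (p_i(q_i) - w(q_S)) q_i` of a coalition `S` of retailers. -/
def coalProfit (R : RSSituation n) (S : Finset (Fin n)) (q : S → ℝ) : ℝ :=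
  ∑ i : S, (R.p i.1 (q i) - R.w (∑ j : S, q j)) * q i

/-- `q` is an optimal order vector for the coalition `S` of retailers. -/
def IsCoalOpt (R : RSSituation n) (S : Finset (Fin n)) (q : S → ℝ) : Prop :=
  q ∈ R.QSet S ∧ ∀ q' ∈ R.QSet S, R.coalProfit S q' ≤ R.coalProfit S q

/-- The feasible set of order quantities of retailer `i` at unit price `c`. -/
def QcSet (R : RSSituation n) (i : Fin n) : Set ℝ :=
  {q | 0 ≤ q ∧ R.c ≤ R.p i q}

/-- The profit `(p_i(q) - c) q` of retailer `i` at unit price `c`. -/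
def indProfit (R : RSSituation n) (i : Fin n) (q : ℝ) : ℝ :=
  (R.p i q - R.c) * q

/-- `q` is an optimal order quantity for retailer `i` at unit price `c`. -/
def IsIndOpt (R : RSSituation n) (i : Fin n) (q : ℝ) : Prop :=
  q ∈ R.QcSet i ∧ ∀ q' ∈ R.QcSet i, R.indProfit i q' ≤ R.indProfit i q

/-- `v` is the RS-game determined by chosen optimal order vectors `qS S`
(for each retailer coalition `S`) and `qc i` (for each retailer `i`, when
cooperating with the supplier).  Players: `none` is the supplier `0`,
`some i` is retailer `i`. -/
def IsRSGame (R : RSSituation n) (qS : (S : Finset (Fin n)) → (S → ℝ))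
    (qc : Fin n → ℝ) (v : Finset (Option (Fin n)) → ℝ) : Prop :=
  v ∅ = 0 ∧ v {none} = 0 ∧
    (∀ S : Finset (Fin n), S.Nonempty → v (S.image some) = R.coalProfit S (qS S)) ∧
    (∀ S : Finset (Fin n), S.Nonempty →
      v (insert none (S.image some)) = ∑ i ∈ S, R.indProfit i (qc i))

/-- The core of a TU game on the player set `N₀ = Option (Fin n)`. -/
def core (v : Finset (Option (Fin n)) → ℝ) : Set (Option (Fin n) → ℝ) :=
  {x | ∑ i : Option (Fin n), x i = v Finset.univ ∧
    ∀ T : Finset (Option (Fin n)), v T ≤ ∑ i ∈ T, x i}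

end RSSituation

/-- Reduced description of the core of an RS-game: the stability conditions
for coalitions containing the supplier can be replaced by the upper bounds
`x i ≤ v({0, i})` for the retailers. -/
theorem rs_game_core_reduced (n : ℕ) (R : RSSituation n)
    (qS : (S : Finset (Fin n)) → (S → ℝ)) (qc : Fin n → ℝ)
    (hqS : ∀ S : Finset (Fin n), S.Nonempty → R.IsCoalOpt S (qS S))
    (hqc : ∀ i : Fin n, R.IsIndOpt i (qc i))
    (v : Finset (Option (Fin n)) → ℝ) (hv : R.IsRSGame qS qc v) :
    RSSituation.core v =
      {x : Option (Fin n) → ℝ |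
        ∑ i : Option (Fin n), x i = v Finset.univ ∧
        (∀ i : Fin n, x (some i) ≤ v {none, some i}) ∧
        ∀ S : Finset (Fin n), v (S.image some) ≤ ∑ i ∈ S, x (some i)} := by
  obtain ⟨hv0, hvn, hvS, hvS0⟩ := hv
  have hvAll : ∀ S : Finset (Fin n),
      v (insert none (S.image some)) = ∑ i ∈ S, R.indProfit i (qc i) := by
    intro S
    rcases S.eq_empty_or_nonempty with h | h
    · subst h; simpa using hvn
    · exact hvS0 S h
  have huniv : (Finset.univ : Finset (Option (Fin n))) =
      insert none ((Finset.univ : Finset (Fin n)).image some) := by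
    ext a; cases a <;> simp
  have hvuniv : v Finset.univ = ∑ i : Fin n, R.indProfit i (qc i) := by
    rw [huniv, hvAll]
  have hpair : ∀ i : Fin n, v {none, some i} = R.indProfit i (qc i) := by
    intro i
    have := hvAll {i}
    simpa using this
  have hinj : ∀ (S : Finset (Fin n)),
      ∀ a ∈ S, ∀ b ∈ S, (some a : Option (Fin n)) = some b → a = b := by
    intro S a _ b _ h; exact Option.some_injective _ h
  have hsum_ins : ∀ (S : Finset (Fin n)) (x : Option (Fin n) → ℝ),
      ∑ j ∈ insert none (S.image some), x j = x none + ∑ i ∈ S, x (some i) := by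
    intro S x
    rw [Finset.sum_insert (by simp), Finset.sum_image (hinj S)]
  ext x
  constructor
  · rintro ⟨hsum, hcore⟩
    refine ⟨hsum, ?_, ?_⟩
    · intro i
      have h1 := hcore (insert none ((Finset.univ.erase i).image some))
      rw [hvAll, hsum_ins] at h1
      have h2 : ∑ j : Option (Fin n), x j = x none + ∑ j : Fin n, x (some j) :=
        Fintype.sum_option x
      have h3 := Finset.add_sum_erase Finset.univ
        (fun j => R.indProfit j (qc j)) (Finset.mem_univ i)
      have h4 := Finset.add_sum_erase Finset.univ
        (fun j => x (some j)) (Finset.mem_univ i)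
      rw [hpair]
      rw [hvuniv] at hsum
      linarith
    · intro S
      have := hcore (S.image some)
      rwa [Finset.sum_image (hinj S)] at this
  · rintro ⟨hsum, hub, hlb⟩
    refine ⟨hsum, ?_⟩
    intro T
    by_cases hnone : none ∈ T
    · set S : Finset (Fin n) :=
        T.preimage some (fun a _ b _ h => Option.some_injective _ h) with hS
      have hT : T = insert none (S.image some) := by
        ext a; cases a <;> simp [hS, hnone] <;> exact Finset.mem_preimage.symm
      rw [hT, hvAll, hsum_ins]
      have key : ∀ j ∈ Finset.univ \ S, x (some j) ≤ R.indProfit j (qc j) := by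
        intro j _
        have := hub j; rwa [hpair j] at this
      have hsplit1 : ∑ j ∈ Finset.univ \ S, R.indProfit j (qc j)
          + ∑ j ∈ S, R.indProfit j (qc j) = ∑ j : Fin n, R.indProfit j (qc j) :=
        Finset.sum_sdiff (Finset.subset_univ S)
      have hsplit2 : ∑ j ∈ Finset.univ \ S, x (some j)
          + ∑ j ∈ S, x (some j) = ∑ j : Fin n, x (some j) :=
        Finset.sum_sdiff (Finset.subset_univ S)
      have h2 : ∑ j : Option (Fin n), x j = x none + ∑ j : Fin n, x (some j) :=
        Fintype.sum_option x
      have hle : ∑ j ∈ Finset.univ \ S, x (some j)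
          ≤ ∑ j ∈ Finset.univ \ S, R.indProfit j (qc j) := Finset.sum_le_sum key
      rw [hvuniv] at hsum
      linarith
    · set S : Finset (Fin n) :=
        T.preimage some (fun a _ b _ h => Option.some_injective _ h) with hS
      have hT : T = S.image some := by
        ext a; cases a <;> simp [hS, hnone] <;> exact Finset.mem_preimage.symm
      rw [hT, Finset.sum_image (hinj S)]
      exact hlb S
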